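/- Let L be a degree-2 pseudoexpectation on ℝ[u₁,…,u_n]. Then the matrix M ∈ ℝ^{n×n} with entries M_{ij} = L(u_i u_j) − L(u_i)·L(u_j) is positive semidefinite, and there exists a Gaussian probability measure μ on ℝⁿ (with mean vector (L(u_1),…,L(u_n)) and covariance matrix M) such that ∫ Q dμ = L(Q) for every polynomial Q of degree at most 2. -/

import Mathlib

open MvPolynomial MeasureTheory ProbabilityTheory Real Set
open scoped NNReal ENNReal

noncomputable section

local notation "γ" => gaussianReal 0 1

lemma gauss_pdf_eq : gaussianPDFReal 0 1 = fun x : ℝ => (√(2 * π))⁻¹ * rexp (-(2⁻¹) * x ^ 2) := by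
  ext x
  simp only [gaussianPDFReal, NNReal.coe_one, mul_one, sub_zero]
  ring_nf

lemma gauss_eq : γ = volume.withDensity fun x => ((Real.toNNReal (gaussianPDFReal 0 1 x) : ℝ≥0) : ℝ≥0∞) := by
  rw [gaussianReal_of_var_ne_zero _ one_ne_zero]
  rfl

lemma meas_pdf : Measurable fun x => Real.toNNReal (gaussianPDFReal 0 1 x) :=
  (measurable_gaussianPDFReal 0 1).real_toNNReal

lemma integrable_gauss_iff (g : ℝ → ℝ) :
    Integrable g γ ↔ Integrable (fun x => gaussianPDFReal 0 1 x * g x) volume := by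
  rw [gauss_eq, integrable_withDensity_iff_integrable_smul meas_pdf]
  constructor <;> intro h <;> refine h.congr (Filter.Eventually.of_forall fun x => ?_) <;>
    simp [NNReal.smul_def, Real.coe_toNNReal _ (gaussianPDFReal_nonneg 0 1 x)]

lemma integral_gauss (g : ℝ → ℝ) :
    ∫ x, g x ∂γ = ∫ x, gaussianPDFReal 0 1 x * g x := by
  rw [gauss_eq, integral_withDensity_eq_integral_smul meas_pdf]
  refine integral_congr_ae (Filter.Eventually.of_forall fun x => ?_)
  simp [NNReal.smul_def, Real.coe_toNNReal _ (gaussianPDFReal_nonneg 0 1 x)]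

lemma integrable_gauss_pow {m : ℕ} (hm : m ≤ 2) : Integrable (fun t : ℝ => t ^ m) γ := by
  rw [integrable_gauss_iff, gauss_pdf_eq]
  interval_cases m
  · simpa using (integrable_exp_neg_mul_sq (by norm_num : (0:ℝ) < 2⁻¹)).const_mul (√(2 * π))⁻¹
  · refine ((integrable_mul_exp_neg_mul_sq (by norm_num : (0:ℝ) < 2⁻¹)).const_mul (√(2 * π))⁻¹).congr
      (Filter.Eventually.of_forall fun x => ?_)
    simp; ring
  · have h := (integrable_rpow_mul_exp_neg_mul_sq (by norm_num : (0:ℝ) < 2⁻¹)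
      (by norm_num : (-1:ℝ) < 2)).const_mul (√(2 * π))⁻¹
    have h2 : ∀ x : ℝ, x ^ (2:ℝ) = x ^ 2 := fun x => by
      rw [show (2:ℝ) = ((2:ℕ):ℝ) by norm_num, Real.rpow_natCast]
    refine h.congr (Filter.Eventually.of_forall fun x => ?_)
    simp only [h2]
    ring

lemma integral_gauss_id : ∫ t, t ^ 1 ∂γ = 0 := by
  rw [integral_gauss, gauss_pdf_eq]
  have h : ∫ x : ℝ, (√(2 * π))⁻¹ * rexp (-(2⁻¹) * x ^ 2) * x ^ 1 =
      ∫ x : ℝ, (√(2 * π))⁻¹ * rexp (-(2⁻¹) * (-x) ^ 2) * (-x) ^ 1 :=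
    (integral_neg_eq_self _ _).symm
  have h2 : ∫ x : ℝ, (√(2 * π))⁻¹ * rexp (-(2⁻¹) * (-x) ^ 2) * (-x) ^ 1 =
      -∫ x : ℝ, (√(2 * π))⁻¹ * rexp (-(2⁻¹) * x ^ 2) * x ^ 1 := by
    rw [← integral_neg]
    congr 1 with x
    ring_nf
  have := h.trans h2
  linarith

end

noncomputable section

lemma rpow_two_eq (x : ℝ) : x ^ (2:ℝ) = x ^ 2 := by
  rw [show (2:ℝ) = ((2:ℕ):ℝ) by norm_num, Real.rpow_natCast]

lemma even_split (f : ℝ → ℝ) (hf : Integrable f) (he : ∀ x, f (-x) = f x) :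
    ∫ x, f x = 2 * ∫ x in Ioi (0:ℝ), f x := by
  have h1 : (∫ x in Iic (0:ℝ), f x) + ∫ x in Ioi (0:ℝ), f x = ∫ x, f x :=
    intervalIntegral.integral_Iic_add_Ioi hf.integrableOn hf.integrableOn
  have h2 : ∫ x in Ioi (0:ℝ), f (-x) = ∫ x in Iic (-(0:ℝ)), f x :=
    integral_comp_neg_Ioi 0 f
  simp only [he, neg_zero] at h2
  linarith

lemma key_gamma (q : ℝ) (hq : -1 < q) :
    ∫ x in Ioi (0:ℝ), x ^ q * rexp (-2⁻¹ * x ^ 2) =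
      (2⁻¹:ℝ) ^ (-(q+1)/2) * (1/2) * Real.Gamma ((q+1)/2) := by
  have h := integral_rpow_mul_exp_neg_mul_rpow (p := 2) (q := q) (b := 2⁻¹)
    two_pos hq (by norm_num)
  simpa only [rpow_two_eq] using h

lemma I2_eq_I0 :
    (∫ x in Ioi (0:ℝ), x ^ (2:ℝ) * rexp (-2⁻¹ * x ^ 2)) =
      ∫ x in Ioi (0:ℝ), x ^ (0:ℝ) * rexp (-2⁻¹ * x ^ 2) := by
  rw [key_gamma 2 (by norm_num), key_gamma 0 (by norm_num)]
  have hg : Real.Gamma ((2+1)/2) = (1/2) * Real.Gamma ((0+1)/2) := by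
    rw [show ((2:ℝ)+1)/2 = (0+1)/2 + 1 by norm_num, Real.Gamma_add_one (by norm_num)]
    norm_num
  have hb : (2⁻¹:ℝ) ^ (-(2+1)/2 : ℝ) = 2 * (2⁻¹:ℝ) ^ (-(0+1)/2 : ℝ) := by
    rw [show (-(2+1)/2 : ℝ) = (-(0+1)/2) + (-1) by norm_num,
      Real.rpow_add (by norm_num), Real.rpow_neg_one]
    norm_num
    ring
  rw [hg, hb]
  ring

lemma integral_gauss_sq : ∫ t, t ^ 2 ∂(gaussianReal 0 1) = 1 := by
  rw [integral_gauss, gauss_pdf_eq]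
  set C : ℝ := (√(2 * π))⁻¹ with hC
  have hnorm : ∫ x : ℝ, C * rexp (-2⁻¹ * x ^ 2) = 1 := by
    have := integral_gaussianPDFReal_eq_one 0 (one_ne_zero (α := ℝ≥0))
    rw [gauss_pdf_eq] at this
    exact this
  have hint0 : Integrable (fun x : ℝ => C * rexp (-2⁻¹ * x ^ 2)) volume :=
    (integrable_exp_neg_mul_sq (by norm_num : (0:ℝ) < 2⁻¹)).const_mul C
  have hint2 : Integrable (fun x : ℝ => C * rexp (-2⁻¹ * x ^ 2) * x ^ 2) volume := by
    have := (integrable_gauss_iff (fun t => t ^ 2)).mp (integrable_gauss_pow (le_refl 2))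
    rwa [gauss_pdf_eq] at this
  have e0 := even_split _ hint0 (fun x => by simp)
  have e2 := even_split _ hint2 (fun x => by simp)
  rw [hnorm] at e0
  rw [e2]
  have c2 : ∫ x in Ioi (0:ℝ), C * rexp (-2⁻¹ * x ^ 2) * x ^ 2
      = C * ∫ x in Ioi (0:ℝ), x ^ (2:ℝ) * rexp (-2⁻¹ * x ^ 2) := by
    rw [← integral_const_mul]
    refine integral_congr_ae (Filter.Eventually.of_forall fun x => ?_)
    simp only [rpow_two_eq]; ring
  have c0 : ∫ x in Ioi (0:ℝ), C * rexp (-2⁻¹ * x ^ 2)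
      = C * ∫ x in Ioi (0:ℝ), x ^ (0:ℝ) * rexp (-2⁻¹ * x ^ 2) := by
    rw [← integral_const_mul]
    refine integral_congr_ae (Filter.Eventually.of_forall fun x => ?_)
    simp only [Real.rpow_zero]; ring
  rw [c2, I2_eq_I0, ← c0]
  linarith

end

noncomputable section

lemma integral_gauss_mom : ∀ m : ℕ, m ≤ 2 → ∫ t, t ^ m ∂(gaussianReal 0 1) = if m = 1 then 0 else 1 := by
  intro m hm
  interval_cases m
  · simp
  · simpa using integral_gauss_id
  · simpa using integral_gauss_sq

variable {ι : Type*} [Fintype ι]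

lemma integral_gauss_id' : ∫ t, t ∂(gaussianReal 0 1) = 0 := by
  simpa using integral_gauss_id

lemma pi_prod_integrable (f : ι → ℝ → ℝ) (hf : ∀ i, Integrable (f i) (gaussianReal 0 1)) :
    Integrable (fun z : ι → ℝ => ∏ i, f i (z i)) (Measure.pi fun _ => gaussianReal 0 1) := by
  letI : MeasureSpace ℝ := ⟨gaussianReal 0 1⟩
  haveI : SigmaFinite (volume : Measure ℝ) := inferInstanceAs (SigmaFinite (gaussianReal 0 1))
  exact MeasureTheory.Integrable.fintype_prod hf

lemma pi_prod_integral (f : ι → ℝ → ℝ) :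
    ∫ z : ι → ℝ, ∏ i, f i (z i) ∂(Measure.pi fun _ => gaussianReal 0 1)
      = ∏ i, ∫ t, f i t ∂(gaussianReal 0 1) := by
  letI : MeasureSpace ℝ := ⟨gaussianReal 0 1⟩
  haveI : SigmaFinite (volume : Measure ℝ) := inferInstanceAs (SigmaFinite (gaussianReal 0 1))
  exact MeasureTheory.integral_fintype_prod_eq_prod f

variable [DecidableEq ι]

lemma coord_prod_eq (k : ι) (z : ι → ℝ) :
    (∏ i, (z i) ^ (if i = k then 1 else 0)) = z k := by
  simp [apply_ite (fun e => z _ ^ e), Finset.prod_ite_eq']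

lemma pair_prod_eq (k l : ι) (z : ι → ℝ) :
    (∏ i, (z i) ^ ((if i = k then 1 else 0) + (if i = l then 1 else 0))) = z k * z l := by
  simp only [pow_add, Finset.prod_mul_distrib, coord_prod_eq]

lemma int_coord (k : ι) :
    Integrable (fun z : ι → ℝ => z k) (Measure.pi fun _ => gaussianReal 0 1) := by
  refine (pi_prod_integrable (fun i t => t ^ (if i = k then 1 else 0)) fun i => ?_).congr
    (Filter.Eventually.of_forall fun z => coord_prod_eq k z)
  exact integrable_gauss_pow (by split_ifs <;> norm_num)

lemma integral_coord (k : ι) :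
    ∫ z : ι → ℝ, z k ∂(Measure.pi fun _ => gaussianReal 0 1) = 0 := by
  rw [integral_congr_ae (Filter.Eventually.of_forall fun z => (coord_prod_eq k z).symm),
    pi_prod_integral (fun i t => t ^ (if i = k then 1 else 0))]
  refine Finset.prod_eq_zero (Finset.mem_univ k) ?_
  simp [integral_gauss_id']

lemma int_pair (k l : ι) :
    Integrable (fun z : ι → ℝ => z k * z l) (Measure.pi fun _ => gaussianReal 0 1) := by
  refine (pi_prod_integrable
    (fun i t => t ^ ((if i = k then 1 else 0) + (if i = l then 1 else 0))) fun i => ?_).congr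
    (Filter.Eventually.of_forall fun z => pair_prod_eq k l z)
  exact integrable_gauss_pow (by split_ifs <;> norm_num)

lemma integral_pair' (k l : ι) :
    ∫ z : ι → ℝ, z k * z l ∂(Measure.pi fun _ => gaussianReal 0 1)
      = if k = l then 1 else 0 := by
  rw [integral_congr_ae (Filter.Eventually.of_forall fun z => (pair_prod_eq k l z).symm),
    pi_prod_integral (fun i t => t ^ ((if i = k then 1 else 0) + (if i = l then 1 else 0)))]
  by_cases hkl : k = l
  · subst hkl
    simp only [if_pos rfl]
    refine Finset.prod_eq_one fun i _ => ?_
    by_cases hik : i = k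
    · subst hik
      simp [integral_gauss_mom 2 le_rfl]
    · simp [hik, integral_gauss_mom 0 (by norm_num)]
  · rw [if_neg hkl]
    refine Finset.prod_eq_zero (Finset.mem_univ k) ?_
    simp only [if_neg hkl, eq_self_iff_true, if_true, pow_one, pow_zero, add_zero, zero_add]
    exact integral_gauss_id'

end

noncomputable section

variable {n : ℕ} (m : Fin n → ℝ) (V : Matrix (Fin n) (Fin n) ℝ)

local notation "πG" => (Measure.pi fun _ : Fin n => gaussianReal 0 1)

lemma int_affine (i : Fin n) :
    Integrable (fun z : Fin n → ℝ => m i + ∑ j, V i j * z j) πG :=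
  (integrable_const _).add (integrable_finset_sum _ fun j _ => (int_coord j).const_mul _)

lemma integral_affine (i : Fin n) :
    ∫ z : Fin n → ℝ, (m i + ∑ j, V i j * z j) ∂πG = m i := by
  rw [integral_add (integrable_const _)
      (integrable_finset_sum _ fun j _ => (int_coord j).const_mul _),
    integral_const, integral_finset_sum _ fun j _ => (int_coord j).const_mul _]
  simp [integral_const_mul, integral_coord, measure_univ]

lemma affine_mul_expand (i j : Fin n) (z : Fin n → ℝ) :
    (m i + ∑ k, V i k * z k) * (m j + ∑ l, V j l * z l)
      = m i * m j + ((∑ l, m i * V j l * z l) + ∑ k, m j * V i k * z k)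
        + ∑ k, ∑ l, V i k * V j l * (z k * z l) := by
  have e1 : m i * (∑ l, V j l * z l) = ∑ l, m i * V j l * z l := by
    rw [Finset.mul_sum]; exact Finset.sum_congr rfl fun l _ => by ring
  have e2 : (∑ k, V i k * z k) * m j = ∑ k, m j * V i k * z k := by
    rw [Finset.sum_mul]; exact Finset.sum_congr rfl fun k _ => by ring
  have e3 : (∑ k, V i k * z k) * (∑ l, V j l * z l)
      = ∑ k, ∑ l, V i k * V j l * (z k * z l) := by
    rw [Finset.sum_mul_sum]
    exact Finset.sum_congr rfl fun k _ => Finset.sum_congr rfl fun l _ => by ring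
  calc (m i + ∑ k, V i k * z k) * (m j + ∑ l, V j l * z l)
      = m i * m j + (m i * (∑ l, V j l * z l) + (∑ k, V i k * z k) * m j)
        + (∑ k, V i k * z k) * (∑ l, V j l * z l) := by ring
    _ = _ := by rw [e1, e2, e3]

lemma int_affine_mul (i j : Fin n) :
    Integrable (fun z : Fin n → ℝ =>
      (m i + ∑ k, V i k * z k) * (m j + ∑ l, V j l * z l)) πG := by
  have big : Integrable (fun z : Fin n → ℝ =>
      m i * m j + ((∑ l, m i * V j l * z l) + ∑ k, m j * V i k * z k)
        + ∑ k, ∑ l, V i k * V j l * (z k * z l)) πG :=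
    ((integrable_const _).add
      ((integrable_finset_sum _ fun l _ => (int_coord l).const_mul _).add
        (integrable_finset_sum _ fun k _ => (int_coord k).const_mul _))).add
      (integrable_finset_sum _ fun k _ =>
        integrable_finset_sum _ fun l _ => (int_pair k l).const_mul _)
  exact big.congr (Filter.Eventually.of_forall fun z => (affine_mul_expand m V i j z).symm)

lemma integral_affine_mul (i j : Fin n) :
    ∫ z : Fin n → ℝ, (m i + ∑ k, V i k * z k) * (m j + ∑ l, V j l * z l) ∂πG
      = m i * m j + ∑ k, V i k * V j k := by
  rw [integral_congr_ae (Filter.Eventually.of_forall fun z => affine_mul_expand m V i j z)]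
  have ic : Integrable (fun _ : Fin n → ℝ => m i * m j) πG := integrable_const _
  have is1 : Integrable (fun z : Fin n → ℝ => ∑ l, m i * V j l * z l) πG :=
    integrable_finset_sum _ fun l _ => (int_coord l).const_mul _
  have is2 : Integrable (fun z : Fin n → ℝ => ∑ k, m j * V i k * z k) πG :=
    integrable_finset_sum _ fun k _ => (int_coord k).const_mul _
  have is12 : Integrable (fun z : Fin n → ℝ =>
      (∑ l, m i * V j l * z l) + ∑ k, m j * V i k * z k) πG := is1.add is2
  have hcs : Integrable (fun z : Fin n → ℝ =>
      m i * m j + ((∑ l, m i * V j l * z l) + ∑ k, m j * V i k * z k)) πG := ic.add is12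
  have iss : Integrable (fun z : Fin n → ℝ =>
      ∑ k, ∑ l, V i k * V j l * (z k * z l)) πG :=
    integrable_finset_sum _ fun k _ =>
      integrable_finset_sum _ fun l _ => (int_pair k l).const_mul _
  rw [integral_add hcs iss, integral_add ic is12, integral_add is1 is2,
    integral_finset_sum _ (fun l _ => (int_coord l).const_mul _),
    integral_finset_sum _ (fun k _ => (int_coord k).const_mul _),
    integral_finset_sum _ (fun k _ =>
      integrable_finset_sum _ fun l _ => (int_pair k l).const_mul _)]
  have hin : ∀ k, ∫ z : Fin n → ℝ, ∑ l, V i k * V j l * (z k * z l) ∂πG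
      = V i k * V j k := by
    intro k
    rw [integral_finset_sum _ (fun l _ => (int_pair k l).const_mul _)]
    simp [integral_const_mul, integral_pair', Finset.sum_ite_eq, mul_ite]
  simp [integral_const_mul, integral_coord, hin, measure_univ]

end

lemma mono_cases {n : ℕ} (d : Fin n →₀ ℕ) (hd : (d.sum fun _ e => e) ≤ 2) :
    d = 0 ∨ (∃ i, d = Finsupp.single i 1) ∨
      (∃ i j, d = Finsupp.single i 1 + Finsupp.single j 1) := by
  classical
  have hsum : ∑ i ∈ d.support, d i ≤ 2 := by rwa [Finsupp.sum] at hd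
  by_cases h0 : d.support = ∅
  · exact Or.inl (Finsupp.support_eq_empty.mp h0)
  by_cases h1 : d.support.card = 1
  · obtain ⟨i, hi⟩ := Finset.card_eq_one.mp h1
    obtain ⟨hne, hsingle⟩ := Finsupp.support_eq_singleton.mp hi
    have hle : d i ≤ 2 := by
      rw [hi, Finset.sum_singleton] at hsum
      exact hsum
    have : d i = 1 ∨ d i = 2 := by omega
    rcases this with h | h
    · exact Or.inr (Or.inl ⟨i, by rw [hsingle, h]⟩)
    · refine Or.inr (Or.inr ⟨i, i, ?_⟩)
      rw [hsingle, h, ← Finsupp.single_add]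
  · have hc2 : 1 < d.support.card := by
      rcases Nat.eq_zero_or_pos d.support.card with h | h
      · exact absurd (Finset.card_eq_zero.mp h) h0
      · omega
    obtain ⟨i, hi, j, hj, hne⟩ := Finset.one_lt_card.mp hc2
    have hsub : ({i, j} : Finset (Fin n)) ⊆ d.support := by
      intro x hx
      rcases Finset.mem_insert.mp hx with h | h
      · subst h; exact hi
      · have := Finset.mem_singleton.mp h; subst this; exact hj
    have hpair : d i + d j ≤ 2 := by
      have := le_trans (Finset.sum_le_sum_of_subset hsub (f := fun x => d x)) hsum
      rwa [Finset.sum_pair hne] at this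
    have hi1 : 1 ≤ d i := Nat.one_le_iff_ne_zero.mpr (Finsupp.mem_support_iff.mp hi)
    have hj1 : 1 ≤ d j := Nat.one_le_iff_ne_zero.mpr (Finsupp.mem_support_iff.mp hj)
    have hdi : d i = 1 := by omega
    have hdj : d j = 1 := by omega
    refine Or.inr (Or.inr ⟨i, j, ?_⟩)
    ext x
    rw [Finsupp.add_apply, Finsupp.single_apply, Finsupp.single_apply]
    by_cases hxi : i = x
    · subst hxi
      rw [if_pos rfl, if_neg (fun h => hne h.symm)]
      omega
    by_cases hxj : j = x
    · subst hxj
      rw [if_neg hxi, if_pos rfl]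
      omega
    · rw [if_neg hxi, if_neg hxj]
      by_contra hx0
      have hxs : x ∈ d.support := Finsupp.mem_support_iff.mpr (by omega)
      have hx1 : 1 ≤ d x := Nat.one_le_iff_ne_zero.mpr (Finsupp.mem_support_iff.mp hxs)
      have hsub3 : ({x, i, j} : Finset (Fin n)) ⊆ d.support := by
        intro y hy
        rcases Finset.mem_insert.mp hy with h | h
        · subst h; exact hxs
        · exact hsub h
      have h3 : ∑ y ∈ ({x, i, j} : Finset (Fin n)), d y ≤ 2 :=
        le_trans (Finset.sum_le_sum_of_subset hsub3) hsum
      have hxnot : x ∉ ({i, j} : Finset (Fin n)) := by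
        simp only [Finset.mem_insert, Finset.mem_singleton]
        push_neg
        exact ⟨fun h => hxi h.symm, fun h => hxj h.symm⟩
      rw [Finset.sum_insert hxnot, Finset.sum_pair hne] at h3
      omega

def IsPseudoExpectation (n k : ℕ) (L : MvPolynomial (Fin n) ℝ → ℝ) : Prop :=
  (∀ P Q : MvPolynomial (Fin n) ℝ, L (P + Q) = L P + L Q) ∧
  (∀ (c : ℝ) (P : MvPolynomial (Fin n) ℝ), L (c • P) = c * L P) ∧
  L 1 = 1 ∧
  ∀ P : MvPolynomial (Fin n) ℝ, (P ^ 2).totalDegree ≤ k → 0 ≤ L (P ^ 2)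

theorem stmt8 (n : ℕ) (L : MvPolynomial (Fin n) ℝ → ℝ)
    (hL : IsPseudoExpectation n 2 L) :
    (Matrix.of fun i j : Fin n => L (X i * X j) - L (X i) * L (X j)).PosSemidef ∧
    ∃ (μ : Measure (Fin n → ℝ)) (V : Matrix (Fin n) (Fin n) ℝ),
      IsProbabilityMeasure μ ∧
      V * V.transpose = Matrix.of (fun i j : Fin n => L (X i * X j) - L (X i) * L (X j)) ∧
      μ = Measure.map (fun z i => L (X i) + ∑ j, V i j * z j)
            (Measure.pi fun _ : Fin n => gaussianReal 0 1) ∧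
      ∀ Q : MvPolynomial (Fin n) ℝ, Q.totalDegree ≤ 2 →
        ∫ x, MvPolynomial.eval x Q ∂μ = L Q := by
  classical
  obtain ⟨hadd, hsmul, hone, hpos⟩ := hL
  set M : Matrix (Fin n) (Fin n) ℝ :=
    Matrix.of fun i j : Fin n => L (X i * X j) - L (X i) * L (X j) with hM
  -- the linear map version of L
  let L' : MvPolynomial (Fin n) ℝ →ₗ[ℝ] ℝ :=
    { toFun := L
      map_add' := hadd
      map_smul' := fun c P => by simpa [smul_eq_mul] using hsmul c P }
  have hL'A : ∀ (x : Fin n → ℝ),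
      L' (∑ i, C (x i) * X i) = ∑ i, x i * L (X i) := by
    intro x
    rw [map_sum]
    exact Finset.sum_congr rfl fun i _ => by
      rw [C_mul', _root_.map_smul, smul_eq_mul]; rfl
  -- positive semidefiniteness
  have hPSD : M.PosSemidef := by
    rw [Matrix.posSemidef_iff_dotProduct_mulVec]
    constructor
    · show M.conjTranspose = M
      ext i j
      simp only [Matrix.conjTranspose_apply, Matrix.of_apply, star_trivial, hM]
      rw [mul_comm (X j) (X i), mul_comm (L (X j)) (L (X i))]
    · intro x
      set c : ℝ := ∑ i, x i * L (X i) with hc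
      set A : MvPolynomial (Fin n) ℝ := ∑ i, C (x i) * X i with hA
      set P : MvPolynomial (Fin n) ℝ := A - C c with hP
      have hAA : A * A = ∑ i, ∑ j, C (x i * x j) * (X i * X j) := by
        rw [hA, Finset.sum_mul_sum]
        exact Finset.sum_congr rfl fun i _ => Finset.sum_congr rfl fun j _ => by
          rw [map_mul]; try ring
      have hexp : P ^ 2 = (∑ i, ∑ j, C (x i * x j) * (X i * X j))
          - C (2 * c) * A + C (c * c) := by
        rw [← hAA]
        have h2 : C (2 * c) = (2 * C c : MvPolynomial (Fin n) ℝ) := by rw [map_mul, map_ofNat]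
        have h3 : C (c * c) = (C c * C c : MvPolynomial (Fin n) ℝ) := by rw [map_mul]
        rw [h2, h3, hP]
        ring
      have hdA : A.totalDegree ≤ 1 := by
        refine (totalDegree_finset_sum _ _).trans (Finset.sup_le fun i _ => ?_)
        refine (totalDegree_mul _ _).trans ?_
        simp [totalDegree_C, totalDegree_X]
      have hdP : P.totalDegree ≤ 1 := by
        rw [hP, sub_eq_add_neg, ← map_neg C]
        exact (totalDegree_add _ _).trans (max_le hdA (by simp [totalDegree_C]))
      have hdP2 : (P ^ 2).totalDegree ≤ 2 := by
        rw [pow_two]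
        exact (totalDegree_mul _ _).trans (by omega)
      have hq := hpos P hdP2
      -- compute L (P ^ 2)
      have hLsq : L (P ^ 2) = (∑ i, ∑ j, (x i * x j) * L (X i * X j)) - c * c := by
        have : L (P ^ 2) = L' (P ^ 2) := rfl
        rw [this, hexp, map_add, map_sub]
        have hS : L' (∑ i, ∑ j, C (x i * x j) * (X i * X j))
            = ∑ i, ∑ j, (x i * x j) * L (X i * X j) := by
          rw [map_sum]
          refine Finset.sum_congr rfl fun i _ => ?_
          rw [map_sum]
          exact Finset.sum_congr rfl fun j _ => by
            rw [C_mul', _root_.map_smul, smul_eq_mul]; rfl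
        have hT : L' (C (2 * c) * A) = 2 * c * c := by
          rw [C_mul', _root_.map_smul, smul_eq_mul, hA, hL'A, ← hc]
        have hU : L' (C (c * c)) = c * c := by
          have h1 : (C (c * c) : MvPolynomial (Fin n) ℝ) = (c * c) • 1 := by
            rw [← C_mul', mul_one]
          rw [h1, _root_.map_smul, smul_eq_mul]
          show (c * c) * L 1 = c * c
          rw [hone, mul_one]
        rw [hS, hT, hU]
        ring
      have hquad : dotProduct (star x) (M.mulVec x)
          = (∑ i, ∑ j, (x i * x j) * L (X i * X j)) - c * c := by
        simp only [star_trivial, dotProduct, Matrix.mulVec, hM, Matrix.of_apply]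
        have h1 : ∀ i, x i * ∑ j, (L (X i * X j) - L (X i) * L (X j)) * x j
            = ∑ j, ((x i * x j) * L (X i * X j) - (x i * L (X i)) * (x j * L (X j))) := by
          intro i
          rw [Finset.mul_sum]
          exact Finset.sum_congr rfl fun j _ => by ring
        calc ∑ i, x i * ∑ j, (L (X i * X j) - L (X i) * L (X j)) * x j
            = ∑ i, ∑ j, ((x i * x j) * L (X i * X j)
                - (x i * L (X i)) * (x j * L (X j))) :=
              Finset.sum_congr rfl fun i _ => h1 i
          _ = (∑ i, ∑ j, (x i * x j) * L (X i * X j))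
                - ∑ i, ∑ j, (x i * L (X i)) * (x j * L (X j)) := by
              rw [← Finset.sum_sub_distrib]
              exact Finset.sum_congr rfl fun i _ => by rw [Finset.sum_sub_distrib]
          _ = (∑ i, ∑ j, (x i * x j) * L (X i * X j)) - c * c := by
              rw [← Finset.sum_mul_sum, ← hc]
      rw [hquad, ← hLsq]
      exact hq
  refine ⟨hPSD, ?_⟩
  obtain ⟨B, hB⟩ : ∃ B : Matrix (Fin n) (Fin n) ℝ, M = B.conjTranspose * B := by
    open scoped MatrixOrder in
    exact CStarAlgebra.nonneg_iff_eq_star_mul_self.mp hPSD.nonneg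
  set V : Matrix (Fin n) (Fin n) ℝ := B.transpose with hVdef
  have hV : V * V.transpose = M := by
    rw [hVdef, Matrix.transpose_transpose, ← Matrix.conjTranspose_eq_transpose_of_trivial, ← hB]
  set f : (Fin n → ℝ) → (Fin n → ℝ) := fun z i => L (X i) + ∑ j, V i j * z j with hf
  have hfmeas : Measurable f := by
    refine measurable_pi_lambda _ fun i => Measurable.add measurable_const ?_
    exact Finset.measurable_sum _ fun j _ => (measurable_pi_apply j).const_mul _
  refine ⟨(Measure.pi fun _ : Fin n => gaussianReal 0 1).map f, V,
    Measure.isProbabilityMeasure_map hfmeas.aemeasurable, hV, rfl, ?_⟩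
  intro Q hQ
  rw [MeasureTheory.integral_map hfmeas.aemeasurable
    (Continuous.aestronglyMeasurable (MvPolynomial.continuous_eval (p := Q)))]
  have hmono : ∀ d : Fin n →₀ ℕ, (d.sum fun _ e => e) ≤ 2 →
      Integrable (fun z : Fin n → ℝ => eval (f z) ((monomial d) (1:ℝ)))
        (Measure.pi fun _ : Fin n => gaussianReal 0 1) ∧
      ∫ z : Fin n → ℝ, eval (f z) ((monomial d) (1:ℝ))
        ∂(Measure.pi fun _ : Fin n => gaussianReal 0 1) = L ((monomial d) (1:ℝ)) := by
    intro d hd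
    rcases mono_cases d hd with h0 | ⟨i, hi⟩ | ⟨i, j, hij⟩
    · subst h0
      have h1 : ((monomial (0 : Fin n →₀ ℕ)) (1:ℝ)) = (1 : MvPolynomial (Fin n) ℝ) := by
        simp [monomial_zero']
      rw [h1]
      simp only [map_one]
      refine ⟨integrable_const _, ?_⟩
      simp [hone, measure_univ]
    · subst hi
      have h1 : ((monomial (Finsupp.single i 1)) (1:ℝ)) = (X i : MvPolynomial (Fin n) ℝ) := rfl
      rw [h1]
      simp only [eval_X]
      exact ⟨int_affine (fun i => L (X i)) V i, integral_affine (fun i => L (X i)) V i⟩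
    · subst hij
      have h1 : ((monomial (Finsupp.single i 1 + Finsupp.single j 1)) (1:ℝ))
          = (X i * X j : MvPolynomial (Fin n) ℝ) := by
        rw [show (X i : MvPolynomial (Fin n) ℝ) = (monomial (Finsupp.single i 1)) 1 from rfl,
          show (X j : MvPolynomial (Fin n) ℝ) = (monomial (Finsupp.single j 1)) 1 from rfl,
          monomial_mul, one_mul]
      rw [h1]
      simp only [map_mul, eval_X]
      have hMij : (∑ k, V i k * V j k) = L (X i * X j) - L (X i) * L (X j) := by
        have h2 : (V * V.transpose) i j = M i j := by rw [hV]
        rw [Matrix.mul_apply] at h2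
        simp only [Matrix.transpose_apply] at h2
        rw [h2, hM]
        rfl
      refine ⟨int_affine_mul (fun i => L (X i)) V i j, ?_⟩
      rw [integral_affine_mul (fun i => L (X i)) V i j]
      rw [hMij]
      ring
  have hmonoc : ∀ d : Fin n →₀ ℕ, (d.sum fun _ e => e) ≤ 2 → ∀ cc : ℝ,
      Integrable (fun z : Fin n → ℝ => eval (f z) ((monomial d) cc))
        (Measure.pi fun _ : Fin n => gaussianReal 0 1) ∧
      ∫ z : Fin n → ℝ, eval (f z) ((monomial d) cc)
        ∂(Measure.pi fun _ : Fin n => gaussianReal 0 1) = L ((monomial d) cc) := by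
    intro d hd cc
    have hms : ((monomial d) cc : MvPolynomial (Fin n) ℝ) = cc • (monomial d) 1 := by
      rw [smul_monomial, smul_eq_mul, mul_one]
    rw [hms]
    have hev : ∀ z : Fin n → ℝ, eval (f z) (cc • (monomial d) (1:ℝ))
        = cc * eval (f z) ((monomial d) (1:ℝ)) := fun z => smul_eval _ _ _
    constructor
    · exact (((hmono d hd).1.const_mul cc).congr
        (Filter.Eventually.of_forall fun z => (hev z).symm))
    · rw [integral_congr_ae (Filter.Eventually.of_forall hev), integral_const_mul,
        (hmono d hd).2, ← hsmul cc _]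
  have hint : ∀ d ∈ Q.support, Integrable
      (fun z : Fin n → ℝ => eval (f z) ((monomial d) (coeff d Q)))
      (Measure.pi fun _ : Fin n => gaussianReal 0 1) :=
    fun d hd => (hmonoc d (le_trans (le_totalDegree hd) hQ) _).1
  have hev : ∀ z : Fin n → ℝ, eval (f z) Q
      = ∑ d ∈ Q.support, eval (f z) ((monomial d) (coeff d Q)) := by
    intro z
    conv_lhs => rw [← support_sum_monomial_coeff Q]
    rw [map_sum]
  rw [integral_congr_ae (Filter.Eventually.of_forall hev), integral_finset_sum _ hint,
    Finset.sum_congr rfl (fun d hd => (hmonoc d (le_trans (le_totalDegree hd) hQ) _).2)]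
  have : ∑ d ∈ Q.support, L ((monomial d) (coeff d Q)) = L' (∑ d ∈ Q.support, (monomial d) (coeff d Q)) := (map_sum L' _ _).symm
  rw [this, support_sum_monomial_coeff]
  rfl
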